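/- Let X ⊆ ℝ^k be convex with nonempty interior, and C ∈ ℝ^{(n+1)×k}. If the set U = {x ∈ ℝ^k : Cx ≥ 0} is nonempty, then there exists a point of X that is not efficient for max{Cx : x ∈ X}; that is, X_E^{n+1} ≠ X. -/

import Mathlib

open Matrix Finset

/-- `x0` is a Pareto-efficient point of `X` with respect to the objectives `f i`:
`x0 ∈ X` and no `x ∈ X` weakly dominates `x0` with a strict improvement in some objective. -/
def Efficient {k m : ℕ} (X : Set (Fin k → ℝ)) (f : Fin m → (Fin k → ℝ) → ℝ)
    (x0 : Fin k → ℝ) : Prop :=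
  x0 ∈ X ∧ ¬ ∃ x ∈ X, (∀ i, f i x0 ≤ f i x) ∧ ∃ j, f j x0 < f j x

/-- If `X` is convex with nonempty interior and `U ≠ ∅`, then some point of `X` is not efficient. -/
theorem stmt2 {k n : ℕ} (X : Set (Fin k → ℝ)) (hX : Convex ℝ X)
    (hint : (interior X).Nonempty) (C : Matrix (Fin (n + 1)) (Fin k) ℝ)
    (hU : {d : Fin k → ℝ | (∀ i, 0 ≤ C.mulVec d i) ∧ ∃ j, 0 < C.mulVec d j}.Nonempty) :
    ∃ x ∈ X, ¬ Efficient X (fun i y => C i ⬝ᵥ y) x := by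
  obtain ⟨x0, hx0⟩ := hint
  obtain ⟨d, hd, j, hdj⟩ := hU
  obtain ⟨r, hr, hball⟩ := Metric.isOpen_iff.mp isOpen_interior x0 hx0
  set ε : ℝ := r / (2 * (‖d‖ + 1)) with hε
  have hdpos : (0:ℝ) < ‖d‖ + 1 := by positivity
  have hεpos : 0 < ε := by positivity
  have hmem : x0 + ε • d ∈ X := by
    apply interior_subset
    apply hball
    rw [Metric.mem_ball, dist_eq_norm]
    have : x0 + ε • d - x0 = ε • d := by ring_nf
    rw [this, norm_smul, Real.norm_eq_abs, abs_of_pos hεpos]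
    have h1 : ε * ‖d‖ ≤ ε * (‖d‖ + 1) := by nlinarith [norm_nonneg d]
    have h2 : ε * (‖d‖ + 1) = r / 2 := by rw [hε, div_mul_eq_mul_div, div_eq_div_iff (by positivity) (by positivity)]; ring
    linarith
  refine ⟨x0, interior_subset hx0, fun hEff => ?_⟩
  apply hEff.2
  refine ⟨x0 + ε • d, hmem, ?_, j, ?_⟩
  · intro i
    have hci : C.mulVec d i = C i ⬝ᵥ d := rfl
    have : 0 ≤ ε * (C i ⬝ᵥ d) := mul_nonneg hεpos.le (hci ▸ hd i)
    have hlin : C i ⬝ᵥ (x0 + ε • d) = C i ⬝ᵥ x0 + ε * (C i ⬝ᵥ d) := by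
      rw [dotProduct_add, dotProduct_smul, smul_eq_mul]
    linarith [hlin ▸ le_refl (C i ⬝ᵥ (x0 + ε • d))]
  · have hlin : C j ⬝ᵥ (x0 + ε • d) = C j ⬝ᵥ x0 + ε * (C j ⬝ᵥ d) := by
      rw [dotProduct_add, dotProduct_smul, smul_eq_mul]
    have : 0 < ε * (C j ⬝ᵥ d) := mul_pos hεpos hdj
    linarith [hlin ▸ le_refl (C j ⬝ᵥ (x0 + ε • d))]
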